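/- arXiv:2305.04488 — 3 statements merged into one kernel-verified Lean document; each statement's English description precedes it below -/
import Mathlib

section
/- Let φ ∈ L¹(ℝ^{2n}) ∩ L²(ℝ^{2n}) and k,l ∈ ℤⁿ. Then for almost every (ξ,η) ∈ ℝⁿ×ℝⁿ, the kernel of the Weyl transform of the twisted translate satisfies K_{T^t_{(k,l)}φ}(ξ,η) = e^{πi(2ξ+l)·k} K_φ(ξ+l, η). -/
open MeasureTheory Complex Filter
open scoped Real ENNReal

noncomputable section

/-- Integer–real dot product. -/
def idot {n : ℕ} (k : Fin n → ℤ) (x : Fin n → ℝ) : ℝ := ∑ i, (k i : ℝ) * x i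

/-- Integer–integer dot product. -/
def iidot {n : ℕ} (k l : Fin n → ℤ) : ℤ := ∑ i, k i * l i

/-- Cast an integer vector to a real vector. -/
def intCast {n : ℕ} (k : Fin n → ℤ) : Fin n → ℝ := fun i => (k i : ℝ)

/-- The twisted translation `T^t_{(k,l)} φ` on `ℝⁿ × ℝⁿ`:
`T^t_{(k,l)}φ(x,y) = e^{πi(x·l − y·k)} φ(x−k, y−l)`. -/
def twistT {n : ℕ} (k l : Fin n → ℤ) (φ : (Fin n → ℝ) × (Fin n → ℝ) → ℂ) :
    (Fin n → ℝ) × (Fin n → ℝ) → ℂ := fun p =>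
  Complex.exp (Real.pi * Complex.I * (idot l p.1 - idot k p.2)) *
    φ (p.1 - intCast k, p.2 - intCast l)

/-- The kernel of the Weyl transform of `φ`:
`K_φ(ξ,η) = ∫_{ℝⁿ} φ(x, η−ξ) e^{πi x·(ξ+η)} dx`. -/
def weylKernel {n : ℕ} (φ : (Fin n → ℝ) × (Fin n → ℝ) → ℂ) :
    (Fin n → ℝ) × (Fin n → ℝ) → ℂ := fun p =>
  ∫ x : Fin n → ℝ, φ (x, p.2 - p.1) *
    Complex.exp (Real.pi * Complex.I * (∑ i, x i * (p.1 i + p.2 i)))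

/-- The Zak transform of a kernel `K ∈ L²(ℝ^{2n})`:
`Z K(ξ,ξ',η) = Σ_{m∈ℤⁿ} K(m+ξ,η) e^{−2πi m·ξ'}`. -/
def zakK {n : ℕ} (K : (Fin n → ℝ) × (Fin n → ℝ) → ℂ)
    (ξ ξ' η : Fin n → ℝ) : ℂ :=
  ∑' m : Fin n → ℤ, K (intCast m + ξ, η) *
    Complex.exp (-(2 * Real.pi) * Complex.I * idot m ξ')

/-- The Weyl–Zak transform of `φ`. -/
def zakW {n : ℕ} (φ : (Fin n → ℝ) × (Fin n → ℝ) → ℂ)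
    (ξ ξ' η : Fin n → ℝ) : ℂ := zakK (weylKernel φ) ξ ξ' η

/-- The bracket map `[φ,ψ](ξ,ξ') = ∫_{ℝⁿ} Z_Wφ(ξ,ξ',η) conj(Z_Wψ(ξ,ξ',η)) dη`. -/
def bracket {n : ℕ} (φ ψ : (Fin n → ℝ) × (Fin n → ℝ) → ℂ)
    (ξ ξ' : Fin n → ℝ) : ℂ :=
  ∫ η : Fin n → ℝ, zakW φ ξ ξ' η * (starRingEnd ℂ) (zakW ψ ξ ξ' η)

/-- The (real-valued) autocorrelation bracket `[φ,φ](ξ,ξ') = ∫_{ℝⁿ} |Z_Wφ(ξ,ξ',η)|² dη`. -/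
def abracket {n : ℕ} (φ : (Fin n → ℝ) × (Fin n → ℝ) → ℂ)
    (ξ ξ' : Fin n → ℝ) : ℝ :=
  ∫ η : Fin n → ℝ, ‖zakW φ ξ ξ' η‖ ^ 2

/-- The fundamental domain `[0,1)ⁿ` of `𝕋ⁿ`. -/
def box (n : ℕ) : Set (Fin n → ℝ) := Set.univ.pi fun _ => Set.Ico (0 : ℝ) 1

/-- The `L²` inner product (conjugate-linear in the second argument). -/
def L2inner {α : Type*} [MeasurableSpace α] (μ : Measure α) (f g : α → ℂ) : ℂ :=
  ∫ x, f x * (starRingEnd ℂ) (g x) ∂μ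

/-- `f` belongs to the closed linear span in `L²(ℝ^{2n})` of the twisted translates
`{T^t_{(k,l)}φ : k,l ∈ ℤⁿ}`, i.e. to `V^t(φ)`. -/
def inVt {n : ℕ} (φ f : (Fin n → ℝ) × (Fin n → ℝ) → ℂ) : Prop :=
  ∀ ε : ℝ, 0 < ε →
    ∃ (s : Finset ((Fin n → ℤ) × (Fin n → ℤ))) (a : (Fin n → ℤ) × (Fin n → ℤ) → ℂ),
      eLpNorm (fun p => f p - ∑ kl ∈ s, a kl * twistT kl.1 kl.2 φ p) 2 volume
        < ENNReal.ofReal ε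

/-- the kernel of the Weyl transform of a twisted translate. -/
theorem weylKernel_twistT {n : ℕ} (φ : (Fin n → ℝ) × (Fin n → ℝ) → ℂ)
    (hφ1 : Integrable φ volume) (hφ2 : MemLp φ 2 volume) (k l : Fin n → ℤ) :
    ∀ᵐ p : (Fin n → ℝ) × (Fin n → ℝ) ∂volume,
      weylKernel (twistT k l φ) p
        = Complex.exp (Real.pi * Complex.I * (∑ i, (2 * p.1 i + (l i : ℝ)) * (k i : ℝ))) *
            weylKernel φ (p.1 + intCast l, p.2) := by
  refine Filter.Eventually.of_forall fun p => ?_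
  obtain ⟨ξ, η⟩ := p
  simp only [weylKernel, twistT]
  rw [← MeasureTheory.integral_add_right_eq_self
    (fun x => Complex.exp (Real.pi * Complex.I * (idot l x - idot k (η - ξ))) *
      φ (x - intCast k, η - ξ - intCast l) *
      Complex.exp (Real.pi * Complex.I * ((∑ i, x i * (ξ i + η i) : ℝ) : ℂ))) (intCast k)]
  rw [← MeasureTheory.integral_const_mul]
  refine integral_congr_ae (Filter.Eventually.of_forall fun x => ?_)
  simp only [add_sub_cancel_right]
  have h2 : η - ξ - intCast l = η - (ξ + intCast l) := by ring
  rw [h2]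
  rw [mul_comm (Complex.exp _) (φ _), mul_assoc, mul_comm (Complex.exp _), mul_assoc,
    ← Complex.exp_add, mul_comm _ (φ _ * _), mul_assoc, mul_assoc, ← Complex.exp_add]
  congr 2
  rw [mul_assoc, mul_assoc, ← Complex.ofReal_sub, ← mul_add, ← mul_add, ← mul_add, ← mul_add,
    ← Complex.ofReal_add, ← Complex.ofReal_add]
  congr 2
  rw [Complex.ofReal_inj]
  simp only [idot, intCast, Pi.add_apply, Pi.sub_apply, ← Finset.sum_sub_distrib,
    ← Finset.sum_add_distrib]
  exact Finset.sum_congr rfl fun i _ => by ring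
end
end

section
/- Let φ ∈ L¹(ℝ^{2n}) ∩ L²(ℝ^{2n}) and k,l ∈ ℤⁿ. Then for almost every ξ, ξ' ∈ 𝕋ⁿ and η ∈ ℝⁿ, Z_W(T^t_{(k,l)}φ)(ξ,ξ',η) = e^{2πi(k·ξ + l·ξ')} e^{πi k·l} Z_Wφ(ξ,ξ',η). -/
open MeasureTheory Complex Filter
open scoped Real ENNReal

noncomputable section

section ZakAux

variable {n : ℕ}

lemma idot_add_right (k : Fin n → ℤ) (x y : Fin n → ℝ) :
    idot k (x + y) = idot k x + idot k y := by
  simp [idot, mul_add, Finset.sum_add_distrib]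

lemma idot_sub_right (k : Fin n → ℤ) (x y : Fin n → ℝ) :
    idot k (x - y) = idot k x - idot k y := by
  simp [idot, mul_sub, Finset.sum_sub_distrib]

lemma idot_intCast (k m : Fin n → ℤ) : idot k (intCast m) = ((iidot k m : ℤ) : ℝ) := by
  simp [idot, iidot, intCast]

lemma iidot_comm (k l : Fin n → ℤ) : iidot k l = iidot l k := by
  simp [iidot, mul_comm]

lemma idot_add_left (k l : Fin n → ℤ) (x : Fin n → ℝ) :
    idot (k + l) x = idot k x + idot l x := by
  simp [idot, add_mul, Finset.sum_add_distrib]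

lemma exp_arg_real (k l : Fin n → ℤ) (x ξ η : Fin n → ℝ) :
    idot l (x + intCast k) - idot k (η - ξ) + ∑ i, (x + intCast k) i * (ξ i + η i)
      = ((iidot k l : ℤ) : ℝ) + 2 * idot k ξ + ∑ i, x i * ((ξ + intCast l) i + η i) := by
  have h1 : ∑ i, (x + intCast k) i * (ξ i + η i)
      = (∑ i, x i * (ξ i + η i)) + idot k ξ + idot k η := by
    simp only [idot, Pi.add_apply, intCast]
    rw [← Finset.sum_add_distrib, ← Finset.sum_add_distrib]
    exact Finset.sum_congr rfl fun i _ => by ring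
  have h2 : ∑ i, x i * ((ξ + intCast l) i + η i)
      = (∑ i, x i * (ξ i + η i)) + idot l x := by
    simp only [idot, Pi.add_apply, intCast]
    rw [← Finset.sum_add_distrib]
    exact Finset.sum_congr rfl fun i _ => by ring
  rw [h1, h2, idot_add_right, idot_sub_right, idot_intCast, iidot_comm l k]
  ring

lemma collect (K a b c₁ c₂ d : ℂ) (h : a + b = c₁ + c₂ + d) :
    Complex.exp a * K * Complex.exp b
      = Complex.exp c₁ * Complex.exp c₂ * (K * Complex.exp d) := by
  have h1 : Complex.exp a * K * Complex.exp b = Complex.exp (a + b) * K := by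
    rw [Complex.exp_add]; ring
  have h2 : Complex.exp c₁ * Complex.exp c₂ * (K * Complex.exp d)
      = Complex.exp (c₁ + c₂ + d) * K := by
    rw [Complex.exp_add, Complex.exp_add]; ring
  rw [h1, h2, h]

lemma weylKernel_twistT_s4 (φ : (Fin n → ℝ) × (Fin n → ℝ) → ℂ) (k l : Fin n → ℤ)
    (ξ η : Fin n → ℝ) :
    weylKernel (twistT k l φ) (ξ, η)
      = Complex.exp (Real.pi * Complex.I * ((iidot k l : ℤ) : ℝ)) *
          Complex.exp (2 * Real.pi * Complex.I * idot k ξ) *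
          weylKernel φ (ξ + intCast l, η) := by
  have hshift := integral_add_right_eq_self
    (μ := (volume : Measure (Fin n → ℝ)))
    (fun x => twistT k l φ (x, η - ξ) *
      Complex.exp (Real.pi * Complex.I * (∑ i, x i * (ξ i + η i)))) (intCast k)
  simp only [weylKernel]
  rw [← hshift, ← integral_const_mul]
  refine integral_congr_ae (Eventually.of_forall fun x => ?_)
  simp only [twistT, add_sub_cancel_right, sub_sub]
  refine collect _ _ _ _ _ _ ?_
  have hr := exp_arg_real k l x ξ η
  calc (Real.pi * Complex.I * (((idot l (x + intCast k) : ℝ) : ℂ) - ((idot k (η - ξ) : ℝ) : ℂ)))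
        + Real.pi * Complex.I * ((∑ i, (x + intCast k) i * (ξ i + η i) : ℝ) : ℂ)
      = Real.pi * Complex.I *
          ((idot l (x + intCast k) - idot k (η - ξ)
            + ∑ i, (x + intCast k) i * (ξ i + η i) : ℝ) : ℂ) := by
        push_cast; ring
    _ = Real.pi * Complex.I *
          ((((iidot k l : ℤ) : ℝ) + 2 * idot k ξ
            + ∑ i, x i * ((ξ + intCast l) i + η i) : ℝ) : ℂ) := by rw [hr]
    _ = Real.pi * Complex.I * (((iidot k l : ℤ) : ℝ) : ℂ)
        + 2 * Real.pi * Complex.I * ((idot k ξ : ℝ) : ℂ)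
        + Real.pi * Complex.I * ((∑ i, x i * ((ξ + intCast l) i + η i) : ℝ) : ℂ) := by
        push_cast; ring

lemma collect4 (K a b c d e f : ℂ) (h : Complex.exp (a + b + c) = Complex.exp (d + e + f)) :
    Complex.exp a * Complex.exp b * K * Complex.exp c
      = Complex.exp d * Complex.exp e * (K * Complex.exp f) := by
  have h1 : Complex.exp a * Complex.exp b * K * Complex.exp c
      = Complex.exp (a + b + c) * K := by
    rw [Complex.exp_add, Complex.exp_add]; ring
  have h2 : Complex.exp d * Complex.exp e * (K * Complex.exp f)
      = Complex.exp (d + e + f) * K := by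
    rw [Complex.exp_add, Complex.exp_add]; ring
  rw [h1, h2, h]

lemma zakW_twistT_pt (φ : (Fin n → ℝ) × (Fin n → ℝ) → ℂ) (k l : Fin n → ℤ)
    (ξ ξ' η : Fin n → ℝ) :
    zakW (twistT k l φ) ξ ξ' η
      = Complex.exp (2 * Real.pi * Complex.I * (idot k ξ + idot l ξ')) *
          Complex.exp (Real.pi * Complex.I * ((iidot k l : ℤ) : ℝ)) *
          zakW φ ξ ξ' η := by
  unfold zakW zakK
  set C := Complex.exp (2 * Real.pi * Complex.I * (idot k ξ + idot l ξ')) *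
      Complex.exp (Real.pi * Complex.I * ((iidot k l : ℤ) : ℝ)) with hC
  set g : (Fin n → ℤ) → ℂ := fun m => weylKernel φ (intCast m + ξ, η) *
      Complex.exp (-(2 * Real.pi) * Complex.I * idot m ξ') with hg
  have hterm : ∀ m : Fin n → ℤ,
      weylKernel (twistT k l φ) (intCast m + ξ, η) *
        Complex.exp (-(2 * Real.pi) * Complex.I * idot m ξ')
      = C * g (m + l) := by
    intro m
    rw [weylKernel_twistT_s4]
    have harg : intCast m + ξ + intCast l = intCast (m + l) + ξ := by
      funext i; simp [intCast]; ring
    rw [harg, hC, hg]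
    simp only
    have hA : Real.pi * Complex.I * (((iidot k l : ℤ) : ℝ) : ℂ)
          + 2 * Real.pi * Complex.I * ((idot k (intCast m + ξ) : ℝ) : ℂ)
          + -(2 * Real.pi) * Complex.I * ((idot m ξ' : ℝ) : ℂ)
        = 2 * Real.pi * Complex.I * (((idot k ξ : ℝ) : ℂ) + ((idot l ξ' : ℝ) : ℂ))
          + Real.pi * Complex.I * (((iidot k l : ℤ) : ℝ) : ℂ)
          + -(2 * Real.pi) * Complex.I * ((idot (m + l) ξ' : ℝ) : ℂ)
          + ((iidot k m : ℤ) : ℂ) * (2 * (Real.pi : ℂ) * Complex.I) := by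
      rw [idot_add_right k (intCast m) ξ, idot_intCast k m, idot_add_left m l ξ']
      push_cast; ring
    refine collect4 _ _ _ _ _ _ _ ?_
    rw [hA, Complex.exp_add, Complex.exp_int_mul_two_pi_mul_I, mul_one]
  rw [tsum_congr hterm, tsum_mul_left]
  congr 1
  have := (Equiv.addRight l).tsum_eq (f := g)
  simpa using this

end ZakAux

/-- the Weyl–Zak transform of a twisted translate. -/
theorem zakW_twistT {n : ℕ} (φ : (Fin n → ℝ) × (Fin n → ℝ) → ℂ)
    (hφ1 : Integrable φ volume) (hφ2 : MemLp φ 2 volume) (k l : Fin n → ℤ) :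
    ∀ᵐ q : (Fin n → ℝ) × (Fin n → ℝ) × (Fin n → ℝ)
        ∂(volume.restrict (box n ×ˢ box n ×ˢ (Set.univ : Set (Fin n → ℝ)))),
      zakW (twistT k l φ) q.1 q.2.1 q.2.2
        = Complex.exp (2 * Real.pi * Complex.I * (idot k q.1 + idot l q.2.1)) *
            Complex.exp (Real.pi * Complex.I * ((iidot k l : ℤ) : ℝ)) *
            zakW φ q.1 q.2.1 q.2.2 := by
  refine Eventually.of_forall ?_
  rintro ⟨ξ, ξ', η⟩
  exact zakW_twistT_pt φ k l ξ ξ' η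
end
end

section
/- Let φ ∈ L¹(ℝ^{2n}) ∩ L²(ℝ^{2n}) and k,l ∈ ℤⁿ. Then for almost every ξ ∈ [0,1/2)ⁿ, ξ' ∈ 𝕋ⁿ, and η ∈ ℝⁿ, Z_{Π_H}(T^t_{(2k,l)}φ)(ξ,ξ',η) = e^{4πi k·ξ} e^{4πi l·ξ'} Z_{Π_H}φ(ξ,ξ',η). -/
open MeasureTheory Complex Filter
open scoped Real ENNReal

noncomputable section

/-- The Weyl–Zak transform associated with the subgroup `H = 2ℤⁿ×ℤⁿ`:
`Z_{Π_H}f(ξ,ξ',η) = Σ_{m∈ℤⁿ} K_f(ξ + m/2, η) e^{−2πi m·ξ'}`. -/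
def zakH {n : ℕ} (φ : (Fin n → ℝ) × (Fin n → ℝ) → ℂ) (ξ ξ' η : Fin n → ℝ) : ℂ :=
  ∑' m : Fin n → ℤ, weylKernel φ (ξ + fun i => (m i : ℝ) / 2, η) *
    Complex.exp (-(2 * Real.pi) * Complex.I * idot m ξ')

/-- The fundamental domain `[0,1/2)ⁿ`. -/
def boxH (n : ℕ) : Set (Fin n → ℝ) := Set.univ.pi fun _ => Set.Ico (0 : ℝ) (1 / 2)

lemma weylKernel_twist {n : ℕ} (φ : (Fin n → ℝ) × (Fin n → ℝ) → ℂ)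
    (k l : Fin n → ℤ) (ξ η : Fin n → ℝ) :
    weylKernel (twistT (fun i => 2 * k i) l φ) (ξ, η)
      = Complex.exp (4 * Real.pi * Complex.I * idot k ξ) *
          weylKernel φ (ξ + intCast l, η) := by
  unfold weylKernel twistT
  rw [← MeasureTheory.integral_add_right_eq_self
    (μ := volume) _ (intCast fun i => 2 * k i), ← integral_const_mul]
  congr 1
  funext u
  have hE : Complex.exp (Real.pi * Complex.I *
        (idot l (u + intCast fun i => 2 * k i) - idot (fun i => 2 * k i) (η - ξ))) *
      Complex.exp (Real.pi * Complex.I *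
        (∑ i, (u + intCast fun i => 2 * k i) i * (ξ i + η i)))
      = Complex.exp (4 * Real.pi * Complex.I * idot k ξ) *
        Complex.exp (Real.pi * Complex.I * (∑ i, u i * ((ξ + intCast l) i + η i))) := by
    rw [← Complex.exp_add, ← Complex.exp_add,
      show (Real.pi * Complex.I *
        (idot l (u + intCast fun i => 2 * k i) - idot (fun i => 2 * k i) (η - ξ)) +
        Real.pi * Complex.I * (∑ i, (u + intCast fun i => 2 * k i) i * (ξ i + η i)) : ℂ)
        = 4 * Real.pi * Complex.I * idot k ξ +
          Real.pi * Complex.I * (∑ i, u i * ((ξ + intCast l) i + η i)) +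
          (iidot k l : ℤ) * (2 * Real.pi * Complex.I) from ?_,
      Complex.exp_add, Complex.exp_int_mul_two_pi_mul_I, mul_one]
    have key : (idot l (u + intCast fun i => 2 * k i) -
          idot (fun i => 2 * k i) (η - ξ)) +
          (∑ i, (u + intCast fun i => 2 * k i) i * (ξ i + η i))
        = 4 * idot k ξ + (∑ i, u i * ((ξ + intCast l) i + η i)) +
          2 * ((iidot k l : ℤ) : ℝ) := by
      simp only [idot, iidot, intCast, Pi.add_apply, Pi.sub_apply]
      push_cast
      rw [Finset.mul_sum, Finset.mul_sum, ← Finset.sum_sub_distrib,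
        ← Finset.sum_add_distrib, ← Finset.sum_add_distrib, ← Finset.sum_add_distrib]
      exact Finset.sum_congr rfl fun i _ => by ring
    have := congrArg (fun r : ℝ => (Real.pi : ℂ) * Complex.I * r) key
    push_cast at this ⊢
    linear_combination this
  rw [add_sub_cancel_right, sub_sub]
  linear_combination φ (u, η - (ξ + intCast l)) * hE

lemma zakH_twist_pt {n : ℕ} (φ : (Fin n → ℝ) × (Fin n → ℝ) → ℂ)
    (k l : Fin n → ℤ) (ξ ξ' η : Fin n → ℝ) :
    zakH (twistT (fun i => 2 * k i) l φ) ξ ξ' η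
      = Complex.exp (4 * Real.pi * Complex.I * idot k ξ) *
          Complex.exp (4 * Real.pi * Complex.I * idot l ξ') *
          zakH φ ξ ξ' η := by
  unfold zakH
  set a : Fin n → ℤ := fun i => 2 * l i with ha
  set h : (Fin n → ℤ) → ℂ := fun m =>
    weylKernel φ (ξ + fun i => (m i : ℝ) / 2, η) *
      Complex.exp (-(2 * Real.pi) * Complex.I * idot m ξ') with hh
  have step1 : ∀ m : Fin n → ℤ,
      weylKernel (twistT (fun i => 2 * k i) l φ) (ξ + fun i => (m i : ℝ) / 2, η) *
        Complex.exp (-(2 * Real.pi) * Complex.I * idot m ξ')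
      = Complex.exp (4 * Real.pi * Complex.I * idot k ξ) *
          Complex.exp (4 * Real.pi * Complex.I * idot l ξ') * h (m + a) := by
    intro m
    rw [weylKernel_twist]
    have harg : ((ξ + fun i => (m i : ℝ) / 2) + intCast l)
        = ξ + fun i => ((m + a) i : ℝ) / 2 := by
      funext i
      simp only [intCast, Pi.add_apply, ha]
      push_cast
      ring
    have hr : idot k (ξ + fun i => (m i : ℝ) / 2) = idot k ξ + ((iidot k m : ℤ) : ℝ) / 2 := by
      simp only [idot, iidot, Pi.add_apply]
      push_cast
      rw [Finset.sum_div, ← Finset.sum_add_distrib]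
      exact Finset.sum_congr rfl fun i _ => by ring
    have h1 : Complex.exp (4 * Real.pi * Complex.I * idot k (ξ + fun i => (m i : ℝ) / 2))
        = Complex.exp (4 * Real.pi * Complex.I * idot k ξ) := by
      have hc := congrArg (fun r : ℝ => (r : ℂ)) hr
      push_cast at hc
      rw [show (4 * (Real.pi : ℂ) * Complex.I * (idot k (ξ + fun i => (m i : ℝ) / 2) : ℝ))
          = 4 * Real.pi * Complex.I * (idot k ξ : ℝ)
            + ((iidot k m : ℤ) : ℂ) * (2 * (Real.pi : ℂ) * Complex.I) from by
            rw [hc]; push_cast; ring,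
        Complex.exp_add, Complex.exp_int_mul_two_pi_mul_I, mul_one]
    have hr2 : idot (m + a) ξ' = idot m ξ' + 2 * idot l ξ' := by
      simp only [idot, Pi.add_apply, ha]
      push_cast
      rw [Finset.mul_sum, ← Finset.sum_add_distrib]
      exact Finset.sum_congr rfl fun i _ => by ring
    have h2 : Complex.exp (-(2 * Real.pi) * Complex.I * idot m ξ')
        = Complex.exp (4 * Real.pi * Complex.I * idot l ξ') *
            Complex.exp (-(2 * Real.pi) * Complex.I * idot (m + a) ξ') := by
      rw [← Complex.exp_add]
      congr 1
      have hc := congrArg (fun r : ℝ => (r : ℂ)) hr2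
      push_cast at hc ⊢
      rw [hc]; ring
    rw [harg, h1, h2, hh]
    ring
  rw [tsum_congr step1, tsum_mul_left]
  congr 1
  have := (Equiv.addRight a).tsum_eq h
  simp only [Equiv.coe_addRight] at this
  exact this

/-- the Weyl–Zak transform `Z_{Π_H}` of the twisted translate
`T^t_{(2k,l)}φ`. -/
theorem zakH_twistT {n : ℕ} (φ : (Fin n → ℝ) × (Fin n → ℝ) → ℂ)
    (hφ1 : Integrable φ volume) (hφ2 : MemLp φ 2 volume) (k l : Fin n → ℤ) :
    ∀ᵐ q : (Fin n → ℝ) × (Fin n → ℝ) × (Fin n → ℝ)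
        ∂(volume.restrict (boxH n ×ˢ box n ×ˢ (Set.univ : Set (Fin n → ℝ)))),
      zakH (twistT (fun i => 2 * k i) l φ) q.1 q.2.1 q.2.2
        = Complex.exp (4 * Real.pi * Complex.I * idot k q.1) *
            Complex.exp (4 * Real.pi * Complex.I * idot l q.2.1) *
            zakH φ q.1 q.2.1 q.2.2 := by
  exact Filter.Eventually.of_forall fun q => zakH_twist_pt φ k l q.1 q.2.1 q.2.2
end
end
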